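/- arXiv:1802.07646 — 3 statements merged into one kernel-verified Lean document; each statement's English description precedes it below -/
import Mathlib

section
/- Let G be a finite non-cyclic abelian group and let M be a maximal cyclic subgroup of G. Then the following are equivalent: (1) for every α ∈ M̃ (the set of non-generators of M) there exists β ∈ G \ M such that α ∈ ⟨β⟩; (2) every Sylow subgroup of G is non-cyclic. -/
/-- The power graph of a group `G`. -/
def powerGraph (G : Type*) [Group G] : SimpleGraph G where
  Adj x y := x ≠ y ∧ (x ∈ Subgroup.zpowers y ∨ y ∈ Subgroup.zpowers x)
  symm := ⟨fun x y h => ⟨h.1.symm, h.2.symm⟩⟩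
  loopless := ⟨fun x h => h.1 rfl⟩

/-- `X` is a (vertex) cut-set of the power graph of `G`:
removing `X` leaves a disconnected induced subgraph. -/
def IsCutSet {G : Type*} [Group G] (X : Set G) : Prop :=
  ¬ ((powerGraph G).induce Xᶜ).Preconnected

/-- `X` is a minimal cut-set of the power graph of `G`. -/
def IsMinimalCutSet {G : Type*} [Group G] (X : Set G) : Prop :=
  IsCutSet X ∧ ∀ x ∈ X, ¬ IsCutSet (X \ {x})

/-- `X` is a minimum cut-set of the power graph of `G`. -/
def IsMinimumCutSet {G : Type*} [Group G] (X : Set G) : Prop :=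
  IsCutSet X ∧ ∀ Y : Set G, IsCutSet Y → X.ncard ≤ Y.ncard

/-- The vertex connectivity of the power graph of `G`: the least number of vertices
whose removal disconnects the graph or leaves only one vertex. -/
noncomputable def kappa (G : Type*) [Group G] : ℕ :=
  sInf {m | ∃ X : Set G, X.ncard = m ∧ (IsCutSet X ∨ Xᶜ.ncard = 1)}

/-- `M` is a maximal cyclic subgroup of `G`: cyclic and not properly contained
in any cyclic subgroup. -/
def IsMaxCyclic {G : Type*} [Group G] (M : Subgroup G) : Prop :=
  (∃ x : G, M = Subgroup.zpowers x) ∧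
    ∀ N : Subgroup G, (∃ y : G, N = Subgroup.zpowers y) → M ≤ N → M = N

/-- The set of non-generators of a (cyclic) subgroup `M` of `G`. -/
def nonGens {G : Type*} [Group G] (M : Subgroup G) : Set G :=
  {x | x ∈ M ∧ Subgroup.zpowers x ≠ M}

/-- `Mbar M` is the union of the sets `M ∩ ⟨y⟩` over all `y ∈ G \ M`. -/
def Mbar {G : Type*} [Group G] (M : Subgroup G) : Set G :=
  ⋃ y ∈ (M : Set G)ᶜ, ((M : Set G) ∩ (Subgroup.zpowers y : Set G))

/-- `(A, B)` is a separation of the induced subgraph of the power graph of `G` on `S`. -/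
def IsSeparationOn {G : Type*} [Group G] (S A B : Set G) : Prop :=
  A.Nonempty ∧ B.Nonempty ∧ Disjoint A B ∧ A ∪ B = S ∧
    ∀ a ∈ A, ∀ b ∈ B, ¬ (powerGraph G).Adj a b

open Subgroup

set_option linter.unusedSectionVars false
set_option maxHeartbeats 1000000

section helpers

variable {G : Type*} [CommGroup G] [Fintype G]

lemma pow_congr_mod {g : G} {d k a : ℕ} (hd : g ^ d = 1) (h : k ≡ a [MOD d]) :
    g ^ k = g ^ a :=
  pow_eq_pow_iff_modEq.mpr (h.of_dvd (orderOf_dvd_of_pow_eq_one hd))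

lemma exists_nat_pow {x g : G} (h : g ∈ zpowers x) : ∃ c : ℕ, x ^ c = g :=
  (isOfFinOrder_of_finite x).mem_powers_iff_mem_zpowers.mpr h

lemma mem_sylow_of_prime_pow_eq_one {q : ℕ} (hq : q.Prime) (P : Sylow q G) {g : G} {i : ℕ}
    (h : g ^ q ^ i = 1) : g ∈ (P : Subgroup G) := by
  haveI := Fact.mk hq
  have hpg : IsPGroup q (zpowers g) := by
    intro h'
    obtain ⟨z, hz⟩ := h'.2
    refine ⟨i, Subtype.ext ?_⟩
    have : ((h' ^ q ^ i : ↥(zpowers g)) : G) = ((h' : G)) ^ q ^ i := by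
      push_cast; rfl
    rw [this, ← hz]
    calc (g ^ z) ^ (q ^ i : ℕ) = (g ^ (q ^ i : ℕ)) ^ z := by
          rw [← zpow_natCast g, ← zpow_mul, mul_comm, zpow_mul, zpow_natCast]
      _ = 1 := by rw [h, one_zpow]
  obtain ⟨Q, hQ⟩ := hpg.exists_le_sylow
  haveI := Sylow.unique_of_normal Q inferInstance
  have : Q = P := Subsingleton.elim _ _
  exact this ▸ hQ (mem_zpowers g)

lemma sylow_cyclic_of_forall_pow_prime {p : ℕ} (hp : p.Prime) (x : G)
    (hall : ∀ w : G, w ^ p = 1 → w ∈ zpowers x) (P : Sylow p G) :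
    IsCyclic ↥(P : Subgroup G) := by
  haveI := Fact.mk hp
  classical
  set Ω : ℕ → Subgroup G := fun i => (powMonoidHom (p ^ i) : G →* G).ker with hΩdef
  have mem_Ω : ∀ (i : ℕ) (g : G), g ∈ Ω i ↔ g ^ p ^ i = 1 := by
    intro i g
    simp [hΩdef, MonoidHom.mem_ker, powMonoidHom_apply]
  have h1 : Nat.card (Ω 1) ≤ p := by
    by_cases hpn : p ∣ orderOf x
    · set n := orderOf x with hn
      have hn0 : 0 < n := orderOf_pos x
      have hd : n / p * p = n := Nat.div_mul_cancel hpn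
      have hle : Ω 1 ≤ zpowers (x ^ (n / p)) := by
        intro g hg
        have hg1 : g ^ p = 1 := by
          have := (mem_Ω 1 g).mp hg
          rwa [pow_one] at this
        obtain ⟨c, rfl⟩ := exists_nat_pow (hall g hg1)
        have hdvd : n ∣ c * p := orderOf_dvd_of_pow_eq_one (by rw [← pow_mul] at hg1; exact hg1)
        have hdvd2 : n / p ∣ c := by
          have : n / p * p ∣ c * p := by rw [hd]; exact hdvd
          exact (Nat.mul_dvd_mul_iff_right hp.pos).mp this
        obtain ⟨e, rfl⟩ := hdvd2
        refine ⟨(e : ℤ), ?_⟩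
        show (x ^ (n / p)) ^ (e : ℤ) = _
        rw [zpow_natCast, ← pow_mul]
      calc Nat.card (Ω 1) ≤ Nat.card (zpowers (x ^ (n / p))) := Subgroup.card_le_of_le hle
        _ = orderOf (x ^ (n / p)) := Nat.card_zpowers _
        _ ≤ p := Nat.le_of_dvd hp.pos (orderOf_dvd_of_pow_eq_one (by
              rw [← pow_mul, hd]; exact pow_orderOf_eq_one x))
    · have hbot : Ω 1 = ⊥ := by
        ext g
        simp only [Subgroup.mem_bot]
        constructor
        · intro hg
          have hg1 : g ^ p = 1 := by
            have := (mem_Ω 1 g).mp hg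
            rwa [pow_one] at this
          have hgx := hall g hg1
          have h1 : orderOf g ∣ orderOf x := orderOf_dvd_of_mem_zpowers hgx
          have h2 : orderOf g ∣ p := orderOf_dvd_of_pow_eq_one hg1
          rcases (Nat.dvd_prime hp).mp h2 with h | h
          · exact orderOf_eq_one_iff.mp h
          · exact absurd (h ▸ h1) hpn
        · rintro rfl; exact one_mem _
      rw [hbot]
      simpa using hp.one_lt.le
  have key : ∀ i, Nat.card (Ω (i + 1)) ≤ Nat.card (Ω i) * Nat.card (Ω 1) := by
    intro i
    set φ : ↥(Ω (i + 1)) →* G := (powMonoidHom p).comp (Ω (i + 1)).subtype with hφ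
    have hcard : Nat.card ↥(Ω (i + 1)) = Nat.card φ.range * Nat.card φ.ker := by
      rw [Subgroup.card_eq_card_quotient_mul_card_subgroup φ.ker]
      congr 1
      exact Nat.card_congr (QuotientGroup.quotientKerEquivRange φ).toEquiv
    have hr : Nat.card φ.range ≤ Nat.card (Ω i) := by
      apply Subgroup.card_le_of_le
      rintro y ⟨g, rfl⟩
      rw [mem_Ω]
      have : φ g = (g : G) ^ p := rfl
      rw [this, ← pow_mul, ← pow_succ']
      exact (mem_Ω _ _).mp g.2
    have hk : Nat.card φ.ker ≤ Nat.card (Ω 1) := by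
      have hinj : Function.Injective (fun h : ↥φ.ker => (⟨((h : ↥(Ω (i + 1))) : G), by
          rw [mem_Ω, pow_one]
          exact h.2⟩ : ↥(Ω 1))) := by
        intro a b hab
        simp only [Subtype.mk.injEq] at hab
        exact Subtype.ext (Subtype.ext hab)
      exact Nat.card_le_card_of_injective _ hinj
    calc Nat.card ↥(Ω (i + 1)) = Nat.card φ.range * Nat.card φ.ker := hcard
      _ ≤ Nat.card (Ω i) * Nat.card (Ω 1) := Nat.mul_le_mul hr hk
  have hΩcard : ∀ i, Nat.card (Ω i) ≤ p ^ i := by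
    intro i
    induction i with
    | zero =>
      have : Ω 0 = ⊥ := by
        ext g
        simp [mem_Ω 0 g, Subgroup.mem_bot]
      rw [this]
      simp
    | succ i ih =>
      calc Nat.card (Ω (i + 1)) ≤ Nat.card (Ω i) * Nat.card (Ω 1) := key i
        _ ≤ p ^ i * p := Nat.mul_le_mul ih h1
        _ = p ^ (i + 1) := (pow_succ p i).symm
  obtain ⟨r, hr⟩ := IsPGroup.iff_card.mp P.isPGroup'
  apply isCyclic_of_card_pow_eq_one_le
  intro n hn
  set t := min (n.factorization p) r with ht
  have hmem : ∀ a : ↥(P : Subgroup G), a ^ n = 1 → (a : G) ∈ Ω t := by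
    intro a ha
    have h1 : orderOf a ∣ n := orderOf_dvd_of_pow_eq_one ha
    have h2 : orderOf a ∣ p ^ r := hr ▸ orderOf_dvd_natCard a
    obtain ⟨s, hs, hsa⟩ := (Nat.dvd_prime_pow hp).mp h2
    have hsn : p ^ s ∣ n := hsa ▸ h1
    have hsf : s ≤ n.factorization p :=
      (Nat.Prime.pow_dvd_iff_le_factorization hp hn.ne').mp hsn
    have hst : s ≤ t := le_min hsf hs
    have hat : a ^ p ^ t = 1 :=
      orderOf_dvd_iff_pow_eq_one.mp (hsa ▸ pow_dvd_pow p hst)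
    rw [mem_Ω]
    have : ((a ^ p ^ t : ↥(P : Subgroup G)) : G) = (a : G) ^ p ^ t := by push_cast; rfl
    rw [← this, hat]; rfl
  have hcount : ({a : ↥(P : Subgroup G) | a ^ n = 1} : Finset _).card ≤ Nat.card (Ω t) := by
    have : Nat.card (Ω t) = (Finset.univ : Finset ↥(Ω t)).card := by
      simp [Nat.card_eq_fintype_card]
    rw [this]
    refine Finset.card_le_card_of_injOn
      (fun a => if h : (a : G) ∈ Ω t then (⟨(a : G), h⟩ : ↥(Ω t)) else 1)
      (fun a _ => Finset.mem_univ _) ?_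
    intro a ha b hb hab
    simp only [Finset.mem_coe, Finset.mem_filter, Finset.mem_univ, true_and] at ha hb
    simp only at hab
    rw [dif_pos (hmem a ha), dif_pos (hmem b hb)] at hab
    simp only [Subtype.mk.injEq] at hab
    exact Subtype.ext hab
  calc ({a : ↥(P : Subgroup G) | a ^ n = 1} : Finset _).card
      ≤ Nat.card (Ω t) := hcount
    _ ≤ p ^ t := hΩcard t
    _ ≤ p ^ n.factorization p := Nat.pow_le_pow_right hp.pos (min_le_left _ _)
    _ ≤ n := Nat.ordProj_le p hn.ne'

end helpers

/-- Proposition (nongen-adjacency): `G` finite non-cyclic abelian, `M` a maximal cyclic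
subgroup; then: every non-generator of `M` lies in `⟨β⟩` for some `β ∈ G \ M` iff every
Sylow subgroup of `G` (at a prime dividing `|G|`) is non-cyclic. -/
theorem statement_17 {G : Type*} [CommGroup G] [Fintype G] (hnc : ¬ IsCyclic G)
    (M : Subgroup G) (hM : IsMaxCyclic M) :
    (∀ α ∈ nonGens M, ∃ β : G, β ∉ M ∧ α ∈ Subgroup.zpowers β) ↔
    (∀ q : ℕ, q.Prime → q ∣ Nat.card G →
      ∀ P : Sylow q G, ¬ IsCyclic ↥((P : Subgroup G))) := by
  have hN0 : Nat.card G ≠ 0 := Nat.card_pos.ne'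
  have hordN : ∀ g : G, g ^ Nat.card G = 1 := fun g =>
    orderOf_dvd_iff_pow_eq_one.mp (orderOf_dvd_natCard g)
  obtain ⟨x, hMx⟩ := hM.1
  constructor
  · -- LHS → all Sylow non-cyclic
    intro hLHS q hq hqN P hPcyc
    haveI := Fact.mk hq
    -- generator of P
    obtain ⟨c₀, hc₀⟩ := hPcyc.exists_generator
    set c : G := (c₀ : G) with hcdef
    have hQ : (P : Subgroup G) = zpowers c := by
      apply le_antisymm
      · intro z hz
        obtain ⟨kz, hkz⟩ := hc₀ ⟨z, hz⟩
        refine mem_zpowers_iff.mpr ⟨kz, ?_⟩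
        have := congrArg (Subtype.val) hkz
        push_cast at this
        exact this
      · exact zpowers_le.mpr c₀.2
    -- CRT setup
    set N := Nat.card G with hNdef
    set R := N.factorization q with hRdef
    set L := N / q ^ R with hLdef
    have hNRL : q ^ R * L = N := Nat.ordProj_mul_ordCompl_eq_self N q
    have hLq : ¬ q ∣ L := Nat.not_dvd_ordCompl hq hN0
    have hcop : Nat.Coprime (q ^ R) L := Nat.Coprime.pow_left _ (hq.coprime_iff_not_dvd.mpr hLq)
    have hR1 : R ≠ 0 := by
      have : 0 < R := hq.factorization_pos_of_dvd hN0 hqN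
      omega
    obtain ⟨j, hj1, hj2⟩ := Nat.chineseRemainder hcop 1 0
    obtain ⟨k, hk1, hk2⟩ := Nat.chineseRemainder hcop 0 1
    have hLdvdj : L ∣ j := (Nat.modEq_zero_iff_dvd).mp hj2
    have hqRdvdk : q ^ R ∣ k := (Nat.modEq_zero_iff_dvd).mp hk1
    have hsplit : ∀ g : G, g ^ j * g ^ k = g := fun g => by
      rw [← pow_add]
      have h1 : (j + k) ≡ 1 [MOD q ^ R] := by simpa using hj1.add hk1
      have h2 : (j + k) ≡ 1 [MOD L] := by simpa using hj2.add hk2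
      have hmod := (Nat.modEq_and_modEq_iff_modEq_mul hcop).mp ⟨h1, h2⟩
      rw [hNRL] at hmod
      calc g ^ (j + k) = g ^ 1 := pow_congr_mod (hordN g) hmod
        _ = g := pow_one g
    have hjq : ∀ g : G, (g ^ j) ^ q ^ R = 1 := fun g => by
      rw [← pow_mul]
      have hd : N ∣ j * q ^ R := by
        rw [← hNRL, mul_comm (q ^ R) L]
        exact mul_dvd_mul hLdvdj dvd_rfl
      calc g ^ (j * q ^ R) = g ^ 0 := pow_congr_mod (hordN g) ((Nat.modEq_zero_iff_dvd).mpr hd)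
        _ = 1 := pow_zero g
    have hkL : ∀ g : G, (g ^ k) ^ L = 1 := fun g => by
      rw [← pow_mul]
      have hd : N ∣ k * L := by rw [← hNRL]; exact mul_dvd_mul hqRdvdk dvd_rfl
      calc g ^ (k * L) = g ^ 0 := pow_congr_mod (hordN g) ((Nat.modEq_zero_iff_dvd).mpr hd)
        _ = 1 := pow_zero g
    -- c has q-power order
    have hcord : c ^ q ^ R = 1 := by
      have h := orderOf_dvd_natCard c₀
      rw [Sylow.card_eq_multiplicity P] at h
      have h2 : c₀ ^ q ^ R = 1 := orderOf_dvd_iff_pow_eq_one.mp h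
      have := congrArg (Subtype.val) h2
      push_cast at this
      exact this
    -- key step
    have hkey : ∀ g : G, x ^ k ∈ zpowers (g ^ k) → c ∈ M ∧ g ^ k ∈ M := by
      intro g hgk
      set γ := c * g ^ k with hγdef
      have hγj : γ ^ j = c := by
        rw [hγdef, mul_pow]
        have h1 : c ^ j = c := by
          calc c ^ j = c ^ 1 := pow_congr_mod hcord hj1
            _ = c := pow_one c
        have h2 : (g ^ k) ^ j = 1 := by
          calc (g ^ k) ^ j = (g ^ k) ^ 0 := pow_congr_mod (hkL g) hj2
            _ = 1 := pow_zero _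
        rw [h1, h2, mul_one]
      have hγk : γ ^ k = g ^ k := by
        rw [hγdef, mul_pow]
        have h1 : c ^ k = 1 := by
          calc c ^ k = c ^ 0 := pow_congr_mod hcord hk1
            _ = 1 := pow_zero c
        have h2 : (g ^ k) ^ k = g ^ k := by
          calc (g ^ k) ^ k = (g ^ k) ^ 1 := pow_congr_mod (hkL g) hk2
            _ = g ^ k := pow_one _
        rw [h1, h2, one_mul]
      have hcγ : c ∈ zpowers γ := mem_zpowers_iff.mpr ⟨(j : ℤ), by rw [zpow_natCast, hγj]⟩
      have hgγ : g ^ k ∈ zpowers γ := mem_zpowers_iff.mpr ⟨(k : ℤ), by rw [zpow_natCast, hγk]⟩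
      have hxq : x ^ j ∈ zpowers c := by
        have := mem_sylow_of_prime_pow_eq_one hq P (hjq x)
        rwa [hQ] at this
      have hxγ : x ∈ zpowers γ := by
        rw [← hsplit x]
        exact mul_mem ((zpowers_le.mpr hcγ) hxq) ((zpowers_le.mpr hgγ) hgk)
      have hMγ : M = zpowers γ := hM.2 _ ⟨γ, rfl⟩ (by rw [hMx]; exact zpowers_le.mpr hxγ)
      exact ⟨by rw [hMγ]; exact hcγ, by rw [hMγ]; exact hgγ⟩
    obtain ⟨hcM, -⟩ := hkey x (mem_zpowers (x ^ k))
    -- q divides the order of x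
    have hcn : orderOf c ∣ orderOf x := by
      rw [hMx] at hcM
      exact orderOf_dvd_of_mem_zpowers hcM
    have hordc : orderOf c = q ^ R := by
      rw [← Nat.card_zpowers, ← hQ, Sylow.card_eq_multiplicity]
    have hqn : q ∣ orderOf x := by
      refine dvd_trans ?_ hcn
      rw [hordc]
      exact dvd_pow_self q hR1
    -- the non-generator α
    set α := x ^ (q * j + k) with hαdef
    have hαM : α ∈ M := by rw [hMx]; exact Subgroup.pow_mem _ (mem_zpowers x) _
    have hqjk : q ∣ q * j + k :=
      Nat.dvd_add ⟨j, rfl⟩ ((dvd_pow_self q hR1).trans hqRdvdk)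
    have hαlt : orderOf α < orderOf x := by
      obtain ⟨f, hf⟩ := hqjk
      obtain ⟨d, hd⟩ := hqn
      have hd0 : 0 < d := by
        rcases Nat.eq_zero_or_pos d with rfl | h
        · rw [mul_zero] at hd
          exact absurd hd (orderOf_pos x).ne'
        · exact h
      have hα1 : α ^ d = 1 := by
        rw [hαdef, hf, ← pow_mul]
        calc x ^ (q * f * d) = (x ^ (q * d)) ^ f := by rw [← pow_mul]; congr 1; ring
          _ = 1 := by rw [← hd, pow_orderOf_eq_one, one_pow]
      have h2 : orderOf α ≤ d := Nat.le_of_dvd hd0 (orderOf_dvd_of_pow_eq_one hα1)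
      have h3 : d < orderOf x := by
        have hq2 := hq.two_le
        calc d = 1 * d := (one_mul d).symm
          _ < q * d := (Nat.mul_lt_mul_right hd0).mpr (by omega)
          _ = orderOf x := hd.symm
      omega
    have hαnon : zpowers α ≠ M := by
      intro hEq
      have : orderOf α = orderOf x := by
        rw [← Nat.card_zpowers α, hEq, hMx, Nat.card_zpowers]
      omega
    obtain ⟨β, hβM, hβα⟩ := hLHS α ⟨hαM, hαnon⟩
    obtain ⟨z, hz⟩ := exists_nat_pow hβα
    have hπ : α ^ k = x ^ k := by
      rw [hαdef, ← pow_mul]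
      apply pow_congr_mod (hordN x)
      rw [← hNRL]
      refine (Nat.modEq_and_modEq_iff_modEq_mul hcop).mp ⟨?_, ?_⟩
      · have e1 : (q * j + k) * k ≡ (q * j + 0) * 0 [MOD q ^ R] :=
          ((Nat.ModEq.refl (q * j)).add hk1).mul hk1
        have e1' : (q * j + k) * k ≡ 0 [MOD q ^ R] := by simpa using e1
        exact e1'.trans hk1.symm
      · have e2 : (q * j + k) * k ≡ (q * 0 + 1) * 1 [MOD L] :=
          (((Nat.ModEq.refl q).mul hj2).add hk2).mul hk2
        have e2' : (q * j + k) * k ≡ 1 [MOD L] := by simpa using e2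
        exact e2'.trans hk2.symm
    have hx_k : x ^ k ∈ zpowers (β ^ k) := by
      refine mem_zpowers_iff.mpr ⟨(z : ℤ), ?_⟩
      rw [zpow_natCast, ← pow_mul, mul_comm, pow_mul, hz, hπ]
    obtain ⟨hcM', hβkM⟩ := hkey β hx_k
    have hβjM : β ^ j ∈ M := by
      have h1 : β ^ j ∈ (P : Subgroup G) := mem_sylow_of_prime_pow_eq_one hq P (hjq β)
      rw [hQ] at h1
      exact (zpowers_le.mpr hcM') h1
    exact hβM (by rw [← hsplit β]; exact M.mul_mem hβjM hβkM)
  · -- all Sylow non-cyclic → LHS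
    intro hRHS α hα
    obtain ⟨hα1, hα2⟩ := hα
    have hαx : α ∈ zpowers x := by rwa [hMx] at hα1
    have hn0 : orderOf x ≠ 0 := (orderOf_pos x).ne'
    have hα0 : orderOf α ≠ 0 := (orderOf_pos α).ne'
    have hdvd : orderOf α ∣ orderOf x := orderOf_dvd_of_mem_zpowers hαx
    have hne : orderOf α ≠ orderOf x := by
      intro h
      apply hα2
      rw [hMx]
      apply Subgroup.eq_of_le_of_card_ge (zpowers_le.mpr hαx)
      rw [Nat.card_zpowers, Nat.card_zpowers, h]
    obtain ⟨E, hE⟩ := hdvd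
    have hE1 : E ≠ 1 := by
      rintro rfl
      rw [mul_one] at hE
      exact hne hE.symm
    have hE0 : E ≠ 0 := by
      rintro rfl
      rw [mul_zero] at hE
      exact hn0 hE
    obtain ⟨p, hp, hpE⟩ := Nat.exists_prime_and_dvd hE1
    haveI := Fact.mk hp
    set a := (orderOf α).factorization p with hadef
    set b := (orderOf x).factorization p with hbdef
    have hab : a < b := by
      have hfac : (orderOf x).factorization = (orderOf α).factorization + E.factorization := by
        rw [hE, Nat.factorization_mul hα0 hE0]
      have hEp : 0 < E.factorization p := hp.factorization_pos_of_dvd hE0 hpE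
      rw [hbdef, hfac]
      simp only [Finsupp.add_apply]
      omega
    have hpn : p ∣ orderOf x := hE ▸ (hpE.mul_left (orderOf α))
    have hpN : p ∣ Nat.card G := hpn.trans (orderOf_dvd_natCard x)
    -- CRT setup
    set N := Nat.card G with hNdef
    set R := N.factorization p with hRdef
    set L := N / p ^ R with hLdef
    have hNRL : p ^ R * L = N := Nat.ordProj_mul_ordCompl_eq_self N p
    have hLp : ¬ p ∣ L := Nat.not_dvd_ordCompl hp hN0
    have hcop : Nat.Coprime (p ^ R) L := Nat.Coprime.pow_left _ (hp.coprime_iff_not_dvd.mpr hLp)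
    have hR1 : R ≠ 0 := by
      have : 0 < R := hp.factorization_pos_of_dvd hN0 hpN
      omega
    obtain ⟨j, hj1, hj2⟩ := Nat.chineseRemainder hcop 1 0
    obtain ⟨k, hk1, hk2⟩ := Nat.chineseRemainder hcop 0 1
    have hLdvdj : L ∣ j := (Nat.modEq_zero_iff_dvd).mp hj2
    have hpRdvdk : p ^ R ∣ k := (Nat.modEq_zero_iff_dvd).mp hk1
    have hsplit : ∀ g : G, g ^ j * g ^ k = g := fun g => by
      rw [← pow_add]
      have h1 : (j + k) ≡ 1 [MOD p ^ R] := by simpa using hj1.add hk1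
      have h2 : (j + k) ≡ 1 [MOD L] := by simpa using hj2.add hk2
      have hmod := (Nat.modEq_and_modEq_iff_modEq_mul hcop).mp ⟨h1, h2⟩
      rw [hNRL] at hmod
      calc g ^ (j + k) = g ^ 1 := pow_congr_mod (hordN g) hmod
        _ = g := pow_one g
    -- obtain w
    have hw : ∃ w : G, w ^ p = 1 ∧ w ∉ M := by
      by_contra hcon
      push_neg at hcon
      obtain ⟨P⟩ := (inferInstance : Nonempty (Sylow p G))
      exact hRHS p hp hpN P (sylow_cyclic_of_forall_pow_prime hp x
        (fun w hwp => by rw [← hMx]; exact hcon w hwp) P)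
    obtain ⟨w, hwp, hwM⟩ := hw
    -- arithmetic setup
    set m := orderOf x / p ^ b with hmdef
    have hmn : p ^ b * m = orderOf x := Nat.ordProj_mul_ordCompl_eq_self _ p
    have hbR : b ≤ R := by
      have hdN : p ^ b ∣ N := (Nat.ordProj_dvd (orderOf x) p).trans (orderOf_dvd_natCard x)
      exact (hp.pow_dvd_iff_le_factorization hN0).mp hdN
    obtain ⟨c, hc⟩ := exists_nat_pow hαx
    set m' := orderOf α / p ^ a with hm'def
    have hm'a : p ^ a * m' = orderOf α := Nat.ordProj_mul_ordCompl_eq_self _ p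
    have hm'L : m' ∣ L := by
      have h1 : m' ∣ N := (Nat.ordCompl_dvd (orderOf α) p).trans
        ((hE ▸ dvd_mul_right (orderOf α) E : orderOf α ∣ orderOf x).trans (orderOf_dvd_natCard x))
      have h2 : ¬ p ∣ m' := Nat.not_dvd_ordCompl hp hα0
      have hcop' : Nat.Coprime m' (p ^ R) :=
        ((hp.coprime_iff_not_dvd.mpr h2).pow_left R).symm
      exact hcop'.dvd_of_dvd_mul_left (by rw [hNRL]; exact h1)
    set u := x ^ (m * p ^ (b - a - 1)) with hudef
    have hba : a + 1 ≤ b := hab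
    have hu1 : u ^ p ^ (a + 1) = 1 := by
      rw [hudef, ← pow_mul, mul_assoc]
      have harith : p ^ (b - a - 1) * p ^ (a + 1) = p ^ b := by
        rw [← pow_add]; congr 1; omega
      rw [harith, mul_comm m, hmn]
      exact pow_orderOf_eq_one x
    have huR : u ^ p ^ R = 1 := by
      obtain ⟨f, hf⟩ := pow_dvd_pow p (le_trans hba hbR)
      rw [hf, pow_mul, hu1, one_pow]
    set s := α ^ j with hsdef
    set t := α ^ k with htdef
    have hst : s * t = α := hsplit α
    have hsa : s ^ p ^ a = 1 := by
      rw [hsdef, ← pow_mul]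
      apply orderOf_dvd_iff_pow_eq_one.mp
      rw [← hm'a, mul_comm (p ^ a) m']
      exact mul_dvd_mul (hm'L.trans hLdvdj) dvd_rfl
    have htL : t ^ L = 1 := by
      rw [htdef, ← pow_mul]
      apply orderOf_dvd_iff_pow_eq_one.mp
      rw [← hm'a]
      exact mul_dvd_mul ((pow_dvd_pow p (le_of_lt hab |>.trans hbR)).trans hpRdvdk) hm'L
    have hsx : s = x ^ (c * j) := by rw [hsdef, ← hc, ← pow_mul]
    have hdvd2 : m * p ^ (b - a) ∣ c * j := by
      have h1 : orderOf x ∣ c * j * p ^ a := by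
        apply orderOf_dvd_of_pow_eq_one
        rw [pow_mul, ← hsx, hsa]
      have h2 : m * p ^ (b - a) * p ^ a = orderOf x := by
        rw [mul_assoc, ← pow_add]
        have : b - a + a = b := by omega
        rw [this, mul_comm m, hmn]
      rw [← h2] at h1
      exact (Nat.mul_dvd_mul_iff_right (pow_pos hp.pos a)).mp h1
    obtain ⟨e, he⟩ := hdvd2
    have hup : u ^ p = x ^ (m * p ^ (b - a)) := by
      rw [hudef, ← pow_mul, mul_assoc]
      have : p ^ (b - a - 1) * p = p ^ (b - a) := by
        rw [← pow_succ]; congr 1; omega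
      rw [this]
    have hsu : s = u ^ (p * e) := by
      calc s = x ^ (m * p ^ (b - a) * e) := by rw [hsx, he]
        _ = (x ^ (m * p ^ (b - a))) ^ e := by rw [← pow_mul]
        _ = (u ^ p) ^ e := by rw [hup]
        _ = u ^ (p * e) := by rw [← pow_mul]
    refine ⟨u * w * t, ?_, ?_⟩
    · intro hβ
      apply hwM
      have hu' : u ∈ M := by rw [hMx, hudef]; exact Subgroup.pow_mem _ (mem_zpowers x) _
      have ht' : t ∈ M := by rw [htdef]; exact M.pow_mem hα1 k
      have hwE : w = u⁻¹ * (u * w * t) * t⁻¹ := by group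
      rw [hwE]
      exact M.mul_mem (M.mul_mem (M.inv_mem hu') hβ) (M.inv_mem ht')
    · obtain ⟨k', hk'1, hk'2⟩ := Nat.chineseRemainder hcop (p * e) 1
      have hpk' : p ∣ k' := by
        have h1 : k' ≡ p * e [MOD p] := hk'1.of_dvd (dvd_pow_self p hR1)
        have h2 : k' ≡ 0 [MOD p] := h1.trans ((Nat.modEq_zero_iff_dvd).mpr ⟨e, rfl⟩)
        exact (Nat.modEq_zero_iff_dvd).mp h2
      refine mem_zpowers_iff.mpr ⟨(k' : ℤ), ?_⟩
      rw [zpow_natCast, mul_pow, mul_pow]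
      have h1 : u ^ k' = s := by
        rw [hsu]
        exact pow_congr_mod huR hk'1
      have h2 : w ^ k' = 1 := by
        obtain ⟨f, rfl⟩ := hpk'
        rw [pow_mul, hwp, one_pow]
      have h3 : t ^ k' = t := by
        calc t ^ k' = t ^ 1 := pow_congr_mod htL hk'2
          _ = t := pow_one t
      rw [h1, h2, h3, mul_one, hst]
end

section
/- Let G be a finite non-cyclic abelian group whose order is divisible by at least two distinct primes. Then for every maximal cyclic subgroup M of G, the following are equivalent: (1) the cut-set M̃ of the power graph P(G) is a minimal cut-set; (2) M̄ = M̃; (3) every Sylow subgroup of G is non-cyclic. -/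
section
variable {G : Type*} [CommGroup G] [Fintype G]

lemma pg_adj_induce {V : Set G} {a b : G} (ha : a ∈ V) (hb : b ∈ V)
    (h : (powerGraph G).Adj a b) : ((powerGraph G).induce V).Adj ⟨a, ha⟩ ⟨b, hb⟩ := h

lemma mem_zpowers_mul_left {a b : G} (h : Nat.Coprime (orderOf a) (orderOf b)) :
    a ∈ Subgroup.zpowers (a * b) := by
  obtain ⟨k, hk1, hk2⟩ := Nat.chineseRemainder h 1 0
  have : (a * b) ^ k = a := by
    rw [mul_pow]
    have ha : a ^ k = a ^ 1 := pow_eq_pow_iff_modEq.mpr hk1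
    have hb : b ^ k = b ^ 0 := pow_eq_pow_iff_modEq.mpr hk2
    rw [ha, hb, pow_one, pow_zero, mul_one]
  exact Subgroup.mem_zpowers_iff.mpr ⟨(k:ℤ), by rw [zpow_natCast, this]⟩
end

section
variable {G : Type*} [CommGroup G] [Fintype G]

lemma mem_zpowers_mul_right {a b : G} (h : Nat.Coprime (orderOf a) (orderOf b)) :
    b ∈ Subgroup.zpowers (a * b) := by
  rw [mul_comm]; exact mem_zpowers_mul_left h.symm

lemma exists_split (y : G) {A B : ℕ} (hAB : orderOf y = A * B) (hco : Nat.Coprime A B) :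
    ∃ c d : G, c ∈ Subgroup.zpowers y ∧ d ∈ Subgroup.zpowers y ∧ y = c * d ∧
      orderOf c ∣ A ∧ orderOf d ∣ B := by
  obtain ⟨k, hk1, hk2⟩ := Nat.chineseRemainder hco 1 0
  obtain ⟨l, hl1, hl2⟩ := Nat.chineseRemainder hco 0 1
  refine ⟨y ^ k, y ^ l, Subgroup.pow_mem _ (Subgroup.mem_zpowers _) k,
    Subgroup.pow_mem _ (Subgroup.mem_zpowers _) l, ?_, ?_, ?_⟩
  · have h1 : k + l ≡ 1 [MOD A * B] := by
      have hA' : k + l ≡ 1 [MOD A] := by simpa using hk1.add hl1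
      have hB' : k + l ≡ 1 [MOD B] := by simpa using hk2.add hl2
      exact (Nat.modEq_and_modEq_iff_modEq_mul hco).mp ⟨hA', hB'⟩
    have : y ^ (k + l) = y ^ 1 := pow_eq_pow_iff_modEq.mpr (hAB ▸ h1)
    rw [← pow_add, this, pow_one]
  · rw [orderOf_dvd_iff_pow_eq_one, ← pow_mul, pow_eq_one_iff_modEq, hAB]
    have : k * A ≡ 0 [MOD A * B] := by
      obtain ⟨t, ht⟩ := (Nat.modEq_zero_iff_dvd).mp hk2
      exact (Nat.modEq_zero_iff_dvd).mpr ⟨t, by rw [ht]; ring⟩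
    simpa using this
  · rw [orderOf_dvd_iff_pow_eq_one, ← pow_mul, pow_eq_one_iff_modEq, hAB]
    have : l * B ≡ 0 [MOD A * B] := by
      obtain ⟨t, ht⟩ := (Nat.modEq_zero_iff_dvd).mp hl1
      exact (Nat.modEq_zero_iff_dvd).mpr ⟨t, by rw [ht]; ring⟩
    simpa using this

lemma mem_zpowers_pow_of_coprime {c : G} {q : ℕ} (h : Nat.Coprime q (orderOf c)) :
    c ∈ Subgroup.zpowers (c ^ q) := by
  obtain ⟨k, hk1, hk2⟩ := Nat.chineseRemainder h 0 1
  obtain ⟨t, ht⟩ := (Nat.modEq_zero_iff_dvd).mp hk1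
  have : (c ^ q) ^ t = c := by
    rw [← pow_mul, ← ht]
    exact (pow_eq_pow_iff_modEq.mpr hk2).trans (pow_one c)
  exact Subgroup.mem_zpowers_iff.mpr ⟨(t:ℤ), by rw [zpow_natCast, this]⟩
end

section
variable {G : Type*} [CommGroup G] [Fintype G]

lemma not_preconnected_of_sep {S A B : Set G} (hA : A.Nonempty) (hB : B.Nonempty)
    (hAS : A ⊆ S) (hBS : B ⊆ S)
    (hdisj : ∀ a ∈ A, a ∉ B) (hcover : ∀ s ∈ S, s ∈ A ∨ s ∈ B)
    (hadj : ∀ a ∈ A, ∀ b ∈ B, ¬ (powerGraph G).Adj a b) :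
    ¬ ((powerGraph G).induce S).Preconnected := by
  intro hpc
  obtain ⟨a, ha⟩ := hA
  obtain ⟨b, hb⟩ := hB
  obtain ⟨w⟩ := hpc ⟨a, hAS ha⟩ ⟨b, hBS hb⟩
  -- show by induction: any walk from a vertex in A to ⟨b⟩ is impossible
  suffices H : ∀ (u v : ↥S) (w : ((powerGraph G).induce S).Walk u v),
      (u : G) ∈ A → (v : G) ∈ B → False by
    exact H _ _ w ha hb
  intro u v w
  induction w with
  | nil => intro h hb'; exact hdisj _ h hb'
  | @cons u v' _ hadj' _ ih =>
    intro hu hb'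
    have hvS : (v' : G) ∈ S := v'.2
    rcases hcover _ hvS with hv | hv
    · exact ih hv hb'
    · exact hadj _ hu _ hv hadj'

lemma card_pow_le_of_prime_le {α : Type*} [CommGroup α] [Fintype α] [DecidableEq α]
    (H : ∀ p : ℕ, p.Prime → (Finset.univ.filter fun a : α => a ^ p = 1).card ≤ p) :
    ∀ n : ℕ, 0 < n → (Finset.univ.filter fun a : α => a ^ n = 1).card ≤ n := by
  intro n
  induction n using Nat.strong_induction_on with
  | _ n ih =>
    intro hn
    rcases eq_or_ne n 1 with rfl | hne
    · refine le_trans (Finset.card_le_one.mpr ?_) le_rfl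
      intro x hx y hy
      simp only [Finset.mem_filter, pow_one] at hx hy
      rw [hx.2, hy.2]
    · -- n ≥ 2
      set q := n.minFac with hq
      have hqp : q.Prime := Nat.minFac_prime hne
      have hqd : q ∣ n := Nat.minFac_dvd n
      obtain ⟨m, hm⟩ := hqd
      have hm0 : 0 < m := by
        rcases Nat.eq_zero_or_pos m with rfl | h; · simp [hm] at hn
        · exact h
      have hmn : m < n := by
        have : 2 ≤ q := hqp.two_le
        calc m < q * m := by nlinarith
        _ = n := hm.symm
      -- map a ↦ a ^ q
      set s := Finset.univ.filter fun a : α => a ^ n = 1 with hs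
      set t := Finset.univ.filter fun a : α => a ^ m = 1 with ht
      have himg : s.image (fun a => a ^ q) ⊆ t := by
        intro b hb
        simp only [Finset.mem_image] at hb
        obtain ⟨a, ha, rfl⟩ := hb
        simp only [hs, Finset.mem_filter, Finset.mem_univ, true_and] at ha ⊢
        rw [ht]; simp only [Finset.mem_filter, Finset.mem_univ, true_and]
        rw [← pow_mul, ← hm, ha]
      have hfib : ∀ b ∈ s.image (fun a => a ^ q), (s.filter fun a => a ^ q = b).card ≤ q := by
        intro b hb
        simp only [Finset.mem_image] at hb
        obtain ⟨a₀, ha₀, rfl⟩ := hb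
        have : (s.filter fun a => a ^ q = a₀ ^ q).card ≤
            (Finset.univ.filter fun a : α => a ^ q = 1).card := by
          apply Finset.card_le_card_of_injOn (fun a => a * a₀⁻¹)
          · intro a ha
            simp only [Finset.mem_coe, Finset.mem_filter, Finset.mem_univ, true_and] at ha ⊢
            rw [mul_pow, ha.2, inv_pow, mul_inv_cancel]
          · intro x _ y _ hxy
            exact mul_right_cancel hxy
        exact this.trans (H q hqp)
      calc s.card ≤ q * (s.image (fun a => a ^ q)).card :=
              Finset.card_le_mul_card_image s q hfib
        _ ≤ q * t.card := Nat.mul_le_mul_left q (Finset.card_le_card himg)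
        _ ≤ q * m := Nat.mul_le_mul_left q (ih m hmn hm0)
        _ = n := hm.symm
end

section
variable {G : Type*} [CommGroup G] [Fintype G]

lemma zpowers_isCyclic (g : G) : IsCyclic ↥(Subgroup.zpowers g) := by
  refine ⟨⟨⟨g, Subgroup.mem_zpowers g⟩, ?_⟩⟩
  rintro ⟨x, k, rfl⟩
  exact ⟨k, by ext; simp⟩

lemma exists_prime_order_not_mem {q : ℕ} (hq : q.Prime) (M : Subgroup G) (g : G)
    (hMg : M = Subgroup.zpowers g)
    (hP : ∀ P : Sylow q G, ¬ IsCyclic ↥(P : Subgroup G)) :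
    ∃ z : G, z ∉ M ∧ z ^ q = 1 ∧ z ≠ 1 := by
  classical
  by_contra hcon
  push_neg at hcon
  have hmem : ∀ z : G, z ^ q = 1 → z ∈ M := by
    intro z hz
    by_contra hzM
    exact hzM (by rw [hcon z hzM hz]; exact M.one_mem)
  haveI := Fact.mk hq
  obtain ⟨P⟩ : Nonempty (Sylow q G) := inferInstance
  apply hP P
  haveI : IsCyclic ↥M := hMg ▸ zpowers_isCyclic g
  apply isCyclic_of_card_pow_eq_one_le
  apply card_pow_le_of_prime_le
  intro p hp
  rcases eq_or_ne p q with rfl | hpq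
  · -- p = q : inject into M
    have hMq : (Finset.univ.filter fun a : ↥M => a ^ p = 1).card ≤ p :=
      IsCyclic.card_pow_eq_one_le hp.pos
    refine le_trans ?_ hMq
    have : ∀ a : ↥(P : Subgroup G), a ^ p = 1 → (a : G) ∈ M := by
      intro a ha
      apply hmem
      have : ((a : G)) ^ p = 1 := by
        have := congrArg (Subtype.val) ha
        simpa using this
      exact this
    have hmap : ∀ a ∈ (Finset.univ.filter fun a : ↥(P : Subgroup G) => a ^ p = 1),
        (if h : (a : G) ∈ M then (⟨(a : G), h⟩ : ↥M) else 1) ∈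
          (Finset.univ.filter fun a : ↥M => a ^ p = 1) := by
      intro a ha
      simp only [Finset.mem_filter, Finset.mem_univ, true_and] at ha ⊢
      rw [dif_pos (this a ha)]
      ext
      simpa using congrArg (Subtype.val) ha
    have hinj : Set.InjOn (fun a : ↥(P : Subgroup G) =>
        if h : (a : G) ∈ M then (⟨(a : G), h⟩ : ↥M) else 1)
        (Finset.univ.filter fun a : ↥(P : Subgroup G) => a ^ p = 1) := by
      intro x hx y hy hxy
      simp only [Finset.mem_coe, Finset.mem_filter, Finset.mem_univ, true_and] at hx hy
      simp only [dif_pos (this x hx), dif_pos (this y hy)] at hxy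
      exact Subtype.ext (by simpa using congrArg (fun z : ↥M => (z : G)) hxy)
    exact Finset.card_le_card_of_injOn _ hmap hinj
  · -- p ≠ q : only identity
    refine le_trans (Finset.card_le_one.mpr ?_) (Nat.one_le_iff_ne_zero.mpr hp.pos.ne')
    intro a ha b hb
    simp only [Finset.mem_filter, Finset.mem_univ, true_and] at ha hb
    have key : ∀ c : ↥(P : Subgroup G), c ^ p = 1 → c = 1 := by
      intro c hc
      have h1 : orderOf c ∣ p := orderOf_dvd_of_pow_eq_one hc
      have h2 : orderOf c ∣ Nat.card ↥(P : Subgroup G) := by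
        rw [Nat.card_eq_fintype_card]; exact orderOf_dvd_card
      rw [P.card_eq_multiplicity] at h2
      rcases (Nat.Prime.eq_one_or_self_of_dvd hp _ h1) with h | h
      · exact orderOf_eq_one_iff.mp h
      · exfalso
        rw [h] at h2
        exact hpq ((Nat.prime_dvd_prime_iff_eq hp hq).mp (hp.dvd_of_dvd_pow h2))
    rw [key a ha, key b hb]
end




section
variable {G : Type*} [CommGroup G] [Fintype G]

lemma mem_Mbar {M : Subgroup G} {x : G} :
    x ∈ Mbar M ↔ ∃ y : G, y ∉ M ∧ x ∈ M ∧ x ∈ Subgroup.zpowers y := by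
  simp only [Mbar, Set.mem_iUnion, Set.mem_inter_iff, Set.mem_compl_iff, SetLike.mem_coe,
    exists_prop]

lemma Mbar_subset_nonGens {M : Subgroup G} (hM : IsMaxCyclic M) : Mbar M ⊆ nonGens M := by
  intro x hx
  rw [mem_Mbar] at hx
  obtain ⟨y, hyM, hxM, hxy⟩ := hx
  refine ⟨hxM, fun hgen => ?_⟩
  have hle : M ≤ Subgroup.zpowers y := by
    rw [← hgen]; exact (Subgroup.zpowers_le).mpr hxy
  exact hyM (by rw [hM.2 _ ⟨y, rfl⟩ hle]; exact Subgroup.mem_zpowers y)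

lemma nonGens_subset_Mbar {M : Subgroup G} (hM : IsMaxCyclic M)
    (h3 : ∀ q : ℕ, q.Prime → q ∣ Nat.card G → ∀ P : Sylow q G, ¬ IsCyclic ↥(P : Subgroup G)) :
    nonGens M ⊆ Mbar M := by
  obtain ⟨g, hg⟩ := hM.1
  intro x hx
  obtain ⟨hxM, hxgen⟩ := hx
  set n := orderOf g with hn
  set d := orderOf x with hd
  have hn0 : n ≠ 0 := (orderOf_pos g).ne'
  have hxz : x ∈ Subgroup.zpowers g := hg ▸ hxM
  obtain ⟨s, hs0⟩ := (IsOfFinOrder.mem_powers_iff_mem_zpowers (isOfFinOrder_of_finite g)).mpr hxz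
  have hs : g ^ s = x := hs0
  have hds : d = n / Nat.gcd n s := by rw [hd, ← hs, orderOf_pow]
  have hgcd : Nat.gcd n s = n / d := by
    rw [hds, Nat.div_div_self (Nat.gcd_dvd_left n s) hn0]
  have hdn : d ∣ n := by rw [hds]; exact Nat.div_dvd_of_dvd (Nat.gcd_dvd_left n s)
  have hdne : d ≠ n := by
    intro hcontra
    apply hxgen
    have hle : Subgroup.zpowers x ≤ M := (Subgroup.zpowers_le).mpr hxM
    refine Subgroup.eq_of_le_of_card_ge hle ?_
    rw [Nat.card_zpowers, ← hd, hcontra, hg, Nat.card_zpowers]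
  have hnd1 : n / d ≠ 1 := fun hcontra =>
    hdne (by rw [← Nat.div_mul_cancel hdn, hcontra, one_mul])
  obtain ⟨q, hq, hqdvd⟩ := Nat.exists_prime_and_dvd hnd1
  have hqcard : q ∣ Nat.card G := by
    calc q ∣ n / d := hqdvd
    _ ∣ n := Nat.div_dvd_of_dvd hdn
    _ ∣ Nat.card G := by
        have : orderOf g ∣ Fintype.card G := orderOf_dvd_card
        simpa [Nat.card_eq_fintype_card] using this
  obtain ⟨z, hzM, hzq, _⟩ := exists_prime_order_not_mem hq M g hg (h3 q hq hqcard)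
  obtain ⟨u, hu⟩ := hqdvd
  have hnds : (n / d) ∣ s := hgcd ▸ Nat.gcd_dvd_right n s
  obtain ⟨t, ht⟩ := hnds
  have hsut : s = u * (q * t) := by rw [ht, hu]; ring
  set y := g ^ u * z with hy
  have hyM : y ∉ M := by
    intro hymem
    apply hzM
    have : z = (g ^ u)⁻¹ * y := by rw [hy]; group
    rw [this]
    exact M.mul_mem (M.inv_mem (M.pow_mem (hg ▸ Subgroup.mem_zpowers g) u)) hymem
  have hxy : x ∈ Subgroup.zpowers y := by
    have : y ^ (q * t) = x := by
      rw [hy, mul_pow, ← hs, hsut]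
      rw [pow_mul g u (q * t)]
      have hz1 : z ^ (q * t) = 1 := by rw [pow_mul, hzq, one_pow]
      rw [hz1, mul_one]
    exact Subgroup.mem_zpowers_iff.mpr ⟨((q * t : ℕ) : ℤ), by rw [zpow_natCast, this]⟩
  exact mem_Mbar.mpr ⟨y, hyM, hxM, hxy⟩
end

section
variable {G : Type*} [CommGroup G] [Fintype G]

lemma q_elt_mem_sylow {q : ℕ} [Fact q.Prime] (P : Sylow q G) {d : G} {j : ℕ}
    (hd : orderOf d ∣ q ^ j) : d ∈ (P : Subgroup G) := by
  obtain ⟨i, _, hie⟩ := (Nat.dvd_prime_pow Fact.out).mp hd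
  have hp : IsPGroup q ↥(Subgroup.zpowers d) :=
    IsPGroup.of_card (n := i) (by rw [Nat.card_zpowers]; exact hie)
  obtain ⟨Q, hQ⟩ := hp.exists_le_sylow
  haveI := Sylow.unique_of_normal Q (Subgroup.normal_of_comm _)
  have : Q = P := Subsingleton.elim Q P
  exact this ▸ hQ (Subgroup.mem_zpowers d)

lemma sylow_eq_zpowers_of_cyclic {q : ℕ} (P : Sylow q G) (hPc : IsCyclic ↥(P : Subgroup G)) :
    ∃ h : G, (P : Subgroup G) = Subgroup.zpowers h := by
  obtain ⟨ζ, hζ⟩ := hPc.exists_generator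
  refine ⟨(ζ : G), le_antisymm ?_ (Subgroup.zpowers_le.mpr ζ.2)⟩
  intro x hx
  obtain ⟨k, hk⟩ := hζ ⟨x, hx⟩
  exact Subgroup.mem_zpowers_iff.mpr ⟨k, by simpa using congrArg Subtype.val hk⟩

lemma sylow_le_max_cyclic {q : ℕ} (hq : q.Prime) {M : Subgroup G} (hM : IsMaxCyclic M)
    (P : Sylow q G) (hPc : IsCyclic ↥(P : Subgroup G)) : (P : Subgroup G) ≤ M := by
  haveI := Fact.mk hq
  obtain ⟨h, hPh⟩ := sylow_eq_zpowers_of_cyclic P hPc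
  obtain ⟨g, hg⟩ := hM.1
  set n := orderOf g with hn
  have hn0 : n ≠ 0 := (orderOf_pos g).ne'
  have hfact : orderOf g = (ordCompl[q] n) * (ordProj[q] n) := by
    rw [← hn, mul_comm, Nat.ordProj_mul_ordCompl_eq_self]
  have hco : (ordCompl[q] n).Coprime (ordProj[q] n) :=
    ((Nat.coprime_ordCompl hq hn0).symm.pow_right _)
  obtain ⟨c, d, _, _, hgcd, hcA, hdB⟩ := exists_split g hfact hco
  have hdP : d ∈ (P : Subgroup G) := q_elt_mem_sylow P hdB
  have hordh : orderOf h ∣ q ^ (Nat.card G).factorization q := by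
    rw [← P.card_eq_multiplicity]
    exact Subgroup.orderOf_dvd_natCard _ (hPh ▸ Subgroup.mem_zpowers h)
  have hcoch : Nat.Coprime (orderOf c) (orderOf h) := by
    have base : Nat.Coprime (ordCompl[q] n) (q ^ (Nat.card G).factorization q) :=
      ((Nat.coprime_ordCompl hq hn0).symm.pow_right _)
    exact Nat.Coprime.coprime_dvd_left hcA (Nat.Coprime.coprime_dvd_right hordh base)
  set N := Subgroup.zpowers (c * h) with hN
  have hcN : c ∈ N := mem_zpowers_mul_left hcoch
  have hhN : h ∈ N := mem_zpowers_mul_right hcoch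
  have hgN : g ∈ N := by
    rw [hgcd]
    exact N.mul_mem hcN ((Subgroup.zpowers_le.mpr hhN) (hPh ▸ hdP))
  have hMN : M ≤ N := by rw [hg]; exact Subgroup.zpowers_le.mpr hgN
  have hMeq : M = N := hM.2 N ⟨c * h, rfl⟩ hMN
  rw [hPh, hMeq]
  exact Subgroup.zpowers_le.mpr hhN
end

section
variable {G : Type*} [CommGroup G] [Fintype G]

lemma exists_bad {q : ℕ} (hq : q.Prime) (hqcard : q ∣ Nat.card G) {M : Subgroup G}
    (hM : IsMaxCyclic M) (P : Sylow q G) (hPc : IsCyclic ↥(P : Subgroup G)) :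
    ∃ x : G, x ∈ nonGens M ∧ x ∉ Mbar M := by
  haveI := Fact.mk hq
  have hPM : (P : Subgroup G) ≤ M := sylow_le_max_cyclic hq hM P hPc
  obtain ⟨g, hg⟩ := hM.1
  set n := orderOf g with hn
  have hn0 : n ≠ 0 := (orderOf_pos g).ne'
  have hgM : g ∈ M := hg ▸ Subgroup.mem_zpowers g
  -- q ∣ n
  have hqn : q ∣ n := by
    have h1 : q ∣ Nat.card ↥(P : Subgroup G) := by
      rw [P.card_eq_multiplicity]
      exact dvd_pow_self q (Nat.Prime.factorization_pos_of_dvd hq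
        (Nat.card_pos).ne' hqcard).ne'
    have h2 : Nat.card ↥(P : Subgroup G) ∣ Nat.card ↥M := Subgroup.card_dvd_of_le hPM
    have h3 : Nat.card ↥M = n := by rw [hg, Nat.card_zpowers]
    exact h3 ▸ h1.trans h2
  set x := g ^ q with hx
  have hxM : x ∈ M := M.pow_mem hgM q
  have hordx : orderOf x = n / q := by
    rw [hx, orderOf_pow, ← hn, Nat.gcd_eq_right hqn]
  have hxgen : Subgroup.zpowers x ≠ M := by
    intro hcontra
    have : orderOf x = n := by
      rw [← Nat.card_zpowers, hcontra, hg, Nat.card_zpowers]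
    rw [hordx] at this
    have : n / q < n := Nat.div_lt_self (Nat.pos_of_ne_zero hn0) hq.one_lt
    omega
  refine ⟨x, ⟨hxM, hxgen⟩, ?_⟩
  intro hmem
  rw [mem_Mbar] at hmem
  obtain ⟨y, hyM, -, hxy⟩ := hmem
  apply hyM
  -- x = y ^ k
  obtain ⟨k, hk0⟩ := (IsOfFinOrder.mem_powers_iff_mem_zpowers (isOfFinOrder_of_finite y)).mpr hxy
  have hk : y ^ k = x := hk0
  -- split g and y into q-part and q'-part
  set m := orderOf y with hm
  have hm0 : m ≠ 0 := (orderOf_pos y).ne'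
  have hfactg : orderOf g = (ordCompl[q] n) * (ordProj[q] n) := by
    rw [← hn, mul_comm, Nat.ordProj_mul_ordCompl_eq_self]
  have hcog : (ordCompl[q] n).Coprime (ordProj[q] n) :=
    ((Nat.coprime_ordCompl hq hn0).symm.pow_right _)
  obtain ⟨c, d, -, -, hgcd, hcA, hdB⟩ := exists_split g hfactg hcog
  have hfacty : orderOf y = (ordCompl[q] m) * (ordProj[q] m) := by
    rw [← hm, mul_comm, Nat.ordProj_mul_ordCompl_eq_self]
  have hcoy : (ordCompl[q] m).Coprime (ordProj[q] m) :=
    ((Nat.coprime_ordCompl hq hm0).symm.pow_right _)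
  obtain ⟨c', d', hc'y, hd'y, hy', hcA', hdB'⟩ := exists_split y hfacty hcoy
  -- d' is a q-element, so in P ≤ M
  have hd'M : d' ∈ M := hPM (q_elt_mem_sylow P hdB')
  -- key computation : x ^ (B * B') in two ways, B := ordProj[q] n, B' := ordProj[q] m
  set B := ordProj[q] n with hB
  set B' := ordProj[q] m with hB'
  have hdpow : d ^ (q * (B * B')) = 1 :=
    orderOf_dvd_iff_pow_eq_one.mp (hdB.trans ⟨q * B', by ring⟩)
  have hd'pow : d' ^ (k * (B * B')) = 1 :=
    orderOf_dvd_iff_pow_eq_one.mp (hdB'.trans ⟨k * B, by ring⟩)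
  have key : c ^ (q * (B * B')) = c' ^ (k * (B * B')) := by
    have e1 : x ^ (B * B') = c ^ (q * (B * B')) := by
      calc x ^ (B * B') = (c * d) ^ (q * (B * B')) := by rw [hx, hgcd, ← pow_mul]
      _ = c ^ (q * (B * B')) * d ^ (q * (B * B')) := mul_pow _ _ _
      _ = c ^ (q * (B * B')) := by rw [hdpow, mul_one]
    have e2 : x ^ (B * B') = c' ^ (k * (B * B')) := by
      calc x ^ (B * B') = (c' * d') ^ (k * (B * B')) := by rw [← hk, hy', ← pow_mul]
      _ = c' ^ (k * (B * B')) * d' ^ (k * (B * B')) := mul_pow _ _ _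
      _ = c' ^ (k * (B * B')) := by rw [hd'pow, mul_one]
    rw [← e1, e2]
  -- c ∈ zpowers c'
  have hcc' : c ∈ Subgroup.zpowers c' := by
    have hcop : Nat.Coprime (q * (B * B')) (orderOf c) := by
      have h1 : Nat.Coprime q (orderOf c) :=
        Nat.Coprime.coprime_dvd_right hcA (Nat.coprime_ordCompl hq hn0)
      have heq2 : q * (B * B') = q ^ (1 + n.factorization q + m.factorization q) := by
        rw [hB, hB', pow_add, pow_add, pow_one, mul_assoc]
      rw [heq2]
      exact h1.pow_left _
    have h1 : c ∈ Subgroup.zpowers (c ^ (q * (B * B'))) := mem_zpowers_pow_of_coprime hcop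
    rw [key] at h1
    exact (Subgroup.zpowers_le.mpr (Subgroup.pow_mem _ (Subgroup.mem_zpowers c') _)) h1
  -- maximality with d * c'
  have hcodc : Nat.Coprime (orderOf d) (orderOf c') := by
    have base : Nat.Coprime (ordProj[q] n) (ordCompl[q] m) :=
      (Nat.coprime_ordCompl hq hm0).pow_left _
    exact Nat.Coprime.coprime_dvd_left hdB (Nat.Coprime.coprime_dvd_right hcA' base)
  set N := Subgroup.zpowers (d * c') with hN
  have hdN : d ∈ N := mem_zpowers_mul_left hcodc
  have hc'N : c' ∈ N := mem_zpowers_mul_right hcodc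
  have hgN : g ∈ N := by
    rw [hgcd]
    exact N.mul_mem ((Subgroup.zpowers_le.mpr hc'N) hcc') hdN
  have hMeq : M = N := hM.2 N ⟨d * c', rfl⟩ (by rw [hg]; exact Subgroup.zpowers_le.mpr hgN)
  rw [hy', hMeq]
  exact N.mul_mem hc'N (hMeq ▸ hd'M)
end


section
variable {G : Type*} [CommGroup G] [Fintype G]

lemma maxCyclic_exists_not_mem (hnc : ¬ IsCyclic G) {M : Subgroup G} (hM : IsMaxCyclic M) :
    ∃ w : G, w ∉ M := by
  by_contra hc
  push_neg at hc
  obtain ⟨g, hg⟩ := hM.1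
  exact hnc ⟨⟨g, fun y => by have := hc y; rwa [hg] at this⟩⟩

lemma isCutSet_nonGens (hnc : ¬ IsCyclic G) {M : Subgroup G} (hM : IsMaxCyclic M) :
    IsCutSet (nonGens M) := by
  obtain ⟨g, hg⟩ := hM.1
  obtain ⟨w, hw⟩ := maxCyclic_exists_not_mem hnc hM
  apply not_preconnected_of_sep (A := {z : G | Subgroup.zpowers z = M}) (B := (↑M : Set G)ᶜ)
  · exact ⟨g, hg.symm⟩
  · exact ⟨w, hw⟩
  · intro z hz
    simp only [Set.mem_compl_iff, nonGens, Set.mem_setOf_eq, not_and, not_ne_iff]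
    intro _; exact hz
  · intro z hz
    simp only [Set.mem_compl_iff, nonGens, Set.mem_setOf_eq, not_and, not_ne_iff]
    intro hzM; exact absurd hzM hz
  · intro a ha hb
    exact hb (ha ▸ Subgroup.mem_zpowers a)
  · intro s hs
    simp only [Set.mem_compl_iff, nonGens, Set.mem_setOf_eq, not_and, not_ne_iff] at hs
    by_cases hsM : s ∈ M
    · exact Or.inl (hs hsM)
    · exact Or.inr hsM
  · rintro a ha b hb (⟨hne, hor⟩ : a ≠ b ∧ (a ∈ Subgroup.zpowers b ∨ b ∈ Subgroup.zpowers a))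
    rcases hor with h | h
    · -- a ∈ zpowers b
      have hle : M ≤ Subgroup.zpowers b := by
        rw [← ha]; exact Subgroup.zpowers_le.mpr h
      exact hb (by rw [SetLike.mem_coe, hM.2 _ ⟨b, rfl⟩ hle]; exact Subgroup.mem_zpowers b)
    · -- b ∈ zpowers a
      exact hb (by rw [SetLike.mem_coe, ← ha]; exact h)

lemma isCutSet_nonGens_diff (hnc : ¬ IsCyclic G) {M : Subgroup G} (hM : IsMaxCyclic M)
    {x : G} (hx : x ∈ nonGens M) (hxbad : x ∉ Mbar M) :
    IsCutSet (nonGens M \ {x}) := by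
  obtain ⟨g, hg⟩ := hM.1
  obtain ⟨w, hw⟩ := maxCyclic_exists_not_mem hnc hM
  apply not_preconnected_of_sep (A := {z : G | Subgroup.zpowers z = M} ∪ {x})
    (B := (↑M : Set G)ᶜ)
  · exact ⟨g, Or.inl hg.symm⟩
  · exact ⟨w, hw⟩
  · rintro z (hz | hz)
    · simp only [Set.mem_compl_iff, Set.mem_diff, nonGens, Set.mem_setOf_eq, Set.mem_singleton_iff]
      intro hcon
      exact hcon.1.2 hz
    · simp only [Set.mem_singleton_iff] at hz
      subst hz
      intro hcon
      exact hcon.2 rfl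
  · intro z hz hcon
    exact hz hcon.1.1
  · rintro a (ha | ha) hamem
    · exact hamem (ha ▸ Subgroup.mem_zpowers a)
    · simp only [Set.mem_singleton_iff] at ha
      subst ha
      exact hamem hx.1
  · intro s hs
    simp only [Set.mem_compl_iff, Set.mem_diff, Set.mem_singleton_iff, not_and] at hs
    by_cases hsM : s ∈ M
    · by_cases hsx : s = x
      · exact Or.inl (Or.inr hsx)
      · rcases Classical.em (Subgroup.zpowers s = M) with hgen | hgen
        · exact Or.inl (Or.inl hgen)
        · exact absurd (hs ⟨hsM, hgen⟩) (by simpa using hsx)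
    · exact Or.inr hsM
  · rintro a ha b hb (⟨hne, hor⟩ : a ≠ b ∧ (a ∈ Subgroup.zpowers b ∨ b ∈ Subgroup.zpowers a))
    rcases ha with ha | ha
    · rcases hor with h | h
      · have hle : M ≤ Subgroup.zpowers b := by
          rw [← ha]; exact Subgroup.zpowers_le.mpr h
        exact hb (by rw [SetLike.mem_coe, hM.2 _ ⟨b, rfl⟩ hle]; exact Subgroup.mem_zpowers b)
      · exact hb (by rw [SetLike.mem_coe, ← ha]; exact h)
    · simp only [Set.mem_singleton_iff] at ha
      subst ha
      rcases hor with h | h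
      · -- a ∈ zpowers b, a = x : x ∈ Mbar
        exact hxbad (mem_Mbar.mpr ⟨b, hb, hx.1, h⟩)
      · -- b ∈ zpowers x ≤ M
        exact hb ((Subgroup.zpowers_le.mpr hx.1) h)
end

section
variable {G : Type*} [CommGroup G] [Fintype G] {M : Subgroup G}

lemma reach_adj {V : Set G} {a b : G} (ha : a ∈ V) (hb : b ∈ V) (hne : a ≠ b)
    (h : a ∈ Subgroup.zpowers b ∨ b ∈ Subgroup.zpowers a) :
    ((powerGraph G).induce V).Reachable ⟨a, ha⟩ ⟨b, hb⟩ :=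
  SimpleGraph.Adj.reachable (pg_adj_induce ha hb (⟨hne, h⟩ : a ≠ b ∧ (a ∈ Subgroup.zpowers b ∨ b ∈ Subgroup.zpowers a)))

lemma one_mem_M (M : Subgroup G) : (1 : G) ∈ M := M.one_mem

lemma reach_step {V : Set G} (hV : ∀ z : G, z ∉ M → z ∈ V)
    {p : ℕ} (hp : p.Prime) {z : G} (hzM : z ∉ M) (hoz : orderOf z = p)
    {y : G} (hy : y ∉ M) (hpy : ¬ p ∣ orderOf y) :
    ((powerGraph G).induce V).Reachable ⟨y, hV y hy⟩ ⟨z, hV z hzM⟩ := by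
  have hz1 : z ≠ 1 := by
    intro h; rw [h, orderOf_one] at hoz; exact hp.one_lt.ne' hoz.symm
  have hy1 : y ≠ 1 := fun h => hy (h ▸ M.one_mem)
  have hco : Nat.Coprime (orderOf y) (orderOf z) := by
    rw [hoz]; exact ((Nat.Prime.coprime_iff_not_dvd hp).mpr hpy).symm
  have hyz : y ∈ Subgroup.zpowers (y * z) := mem_zpowers_mul_left hco
  have hzyz : z ∈ Subgroup.zpowers (y * z) := mem_zpowers_mul_right hco
  have hyzM : y * z ∉ M := fun h => hzM ((Subgroup.zpowers_le.mpr h) hzyz)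
  have e1 : ((powerGraph G).induce V).Reachable ⟨y, hV y hy⟩ ⟨y * z, hV _ hyzM⟩ :=
    reach_adj _ _ (fun h => hz1 (by rwa [left_eq_mul] at h)) (Or.inl hyz)
  have e2 : ((powerGraph G).induce V).Reachable ⟨y * z, hV _ hyzM⟩ ⟨z, hV z hzM⟩ :=
    reach_adj _ _ (fun h => hy1 (by rwa [mul_eq_right] at h)) (Or.inr hzyz)
  exact e1.trans e2

lemma reach_hub {V : Set G} (hV : ∀ z : G, z ∉ M → z ∈ V)
    {q₁ q₂ : ℕ} (hq₁ : q₁.Prime) (hq₂ : q₂.Prime) (hqne : q₁ ≠ q₂)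
    {z₁ z₂ : G} (hz₁M : z₁ ∉ M) (hz₂M : z₂ ∉ M)
    (ho₁ : orderOf z₁ = q₁) (ho₂ : orderOf z₂ = q₂) (h12M : z₁ * z₂ ∉ M) :
    ∀ y : G, ∀ hy : y ∉ M,
      ((powerGraph G).induce V).Reachable ⟨y, hV y hy⟩ ⟨z₁ * z₂, hV _ h12M⟩ := by
  have hco12 : Nat.Coprime (orderOf z₁) (orderOf z₂) := by
    rw [ho₁, ho₂]; exact (Nat.coprime_primes hq₁ hq₂).mpr hqne
  have hz₁1 : z₁ ≠ 1 := fun h => by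
    rw [h, orderOf_one] at ho₁; exact hq₁.one_lt.ne' ho₁.symm
  have hz₂1 : z₂ ≠ 1 := fun h => by
    rw [h, orderOf_one] at ho₂; exact hq₂.one_lt.ne' ho₂.symm
  have hube1 : ((powerGraph G).induce V).Reachable ⟨z₁, hV _ hz₁M⟩ ⟨z₁ * z₂, hV _ h12M⟩ :=
    reach_adj _ _ (fun h => hz₂1 (by rwa [left_eq_mul] at h))
      (Or.inl (mem_zpowers_mul_left hco12))
  have hube2 : ((powerGraph G).induce V).Reachable ⟨z₂, hV _ hz₂M⟩ ⟨z₁ * z₂, hV _ h12M⟩ :=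
    reach_adj _ _ (fun h => hz₁1 (by rwa [right_eq_mul] at h))
      (Or.inl (mem_zpowers_mul_right hco12))
  suffices H : ∀ n : ℕ, ∀ y : G, orderOf y = n → ∀ hy : y ∉ M,
      ((powerGraph G).induce V).Reachable ⟨y, hV y hy⟩ ⟨z₁ * z₂, hV _ h12M⟩ by
    exact fun y hy => H (orderOf y) y rfl hy
  intro n
  induction n using Nat.strong_induction_on with
  | _ n ih =>
  intro y hordy hy
  by_cases h1 : ¬ q₁ ∣ orderOf y
  · exact (reach_step hV hq₁ hz₁M ho₁ hy h1).trans hube1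
  by_cases h2 : ¬ q₂ ∣ orderOf y
  · exact (reach_step hV hq₂ hz₂M ho₂ hy h2).trans hube2
  push_neg at h1 h2
  have hn0 : n ≠ 0 := hordy ▸ (orderOf_pos y).ne'
  have hfacty : orderOf y = (ordCompl[q₁] n) * (ordProj[q₁] n) := by
    rw [hordy, mul_comm, Nat.ordProj_mul_ordCompl_eq_self]
  have hcoy : (ordCompl[q₁] n).Coprime (ordProj[q₁] n) :=
    ((Nat.coprime_ordCompl hq₁ hn0).symm.pow_right _)
  obtain ⟨c, d, hcy, hdy, hy', hcA, hdB⟩ := exists_split y hfacty hcoy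
  have hv1 : 1 ≤ n.factorization q₁ :=
    (Nat.Prime.factorization_pos_of_dvd hq₁ hn0 (hordy ▸ h1))
  have hcompllt : ordCompl[q₁] n < n := by
    apply Nat.div_lt_self (Nat.pos_of_ne_zero hn0)
    exact Nat.one_lt_pow (by omega) hq₁.one_lt
  have hd1 : d ≠ 1 := by
    intro h
    rw [h, mul_one] at hy'
    have h3 : n ∣ ordCompl[q₁] n := by
      have h4 := hcA
      rw [← hy', hordy] at h4
      exact h4
    have := Nat.le_of_dvd (Nat.ordCompl_pos q₁ hn0) h3
    omega
  have hc1 : c ≠ 1 := by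
    intro h
    rw [h, one_mul] at hy'
    have hq2dvd : q₂ ∣ ordProj[q₁] n := by
      calc q₂ ∣ orderOf y := h2
      _ = orderOf d := by rw [hy']
      _ ∣ ordProj[q₁] n := hdB
    exact hqne ((Nat.prime_dvd_prime_iff_eq hq₂ hq₁).mp (hq₂.dvd_of_dvd_pow hq2dvd)).symm
  by_cases hdM : d ∈ M
  · have hcM : c ∉ M := fun hc => hy (hy' ▸ M.mul_mem hc hdM)
    have hcney : y ≠ c := fun h =>
      hd1 (by rw [← h] at hy'; exact (mul_eq_left).mp hy'.symm)
    have hclt : orderOf c < n :=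
      lt_of_le_of_lt (Nat.le_of_dvd (Nat.ordCompl_pos q₁ hn0) hcA) hcompllt
    have e : ((powerGraph G).induce V).Reachable ⟨y, hV y hy⟩ ⟨c, hV c hcM⟩ :=
      reach_adj _ _ hcney (Or.inr hcy)
    exact e.trans (ih (orderOf c) hclt c rfl hcM)
  · have hdney : y ≠ d := by
      intro h
      rw [← h] at hy'
      exact hc1 (by rwa [eq_comm, mul_eq_right] at hy')
    have hq2d : ¬ q₂ ∣ orderOf d := by
      intro hdvd
      exact hqne ((Nat.prime_dvd_prime_iff_eq hq₂ hq₁).mp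
        (hq₂.dvd_of_dvd_pow (hdvd.trans hdB))).symm
    have e : ((powerGraph G).induce V).Reachable ⟨y, hV y hy⟩ ⟨d, hV d hdM⟩ :=
      reach_adj _ _ hdney (Or.inr hdy)
    exact e.trans ((reach_step hV hq₂ hz₂M ho₂ hdM hq2d).trans hube2)
end


section
variable {G : Type*} [CommGroup G] [Fintype G]

lemma minimality_aux (hnc : ¬ IsCyclic G)
    (hdiv : ∃ q₁ q₂ : ℕ, q₁.Prime ∧ q₂.Prime ∧ q₁ ≠ q₂ ∧
      q₁ ∣ Nat.card G ∧ q₂ ∣ Nat.card G)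
    {M : Subgroup G} (hM : IsMaxCyclic M)
    (h3 : ∀ q : ℕ, q.Prime → q ∣ Nat.card G →
      ∀ P : Sylow q G, ¬ IsCyclic ↥((P : Subgroup G)))
    {x : G} (hx : x ∈ nonGens M) :
    ((powerGraph G).induce (nonGens M \ {x})ᶜ).Preconnected := by
  obtain ⟨g, hg⟩ := hM.1
  obtain ⟨q₁, q₂, hq₁, hq₂, hqne, hq₁d, hq₂d⟩ := hdiv
  haveI := Fact.mk hq₁
  haveI := Fact.mk hq₂
  obtain ⟨z₁, hz₁M, hz₁q, hz₁1⟩ := exists_prime_order_not_mem hq₁ M g hg (h3 q₁ hq₁ hq₁d)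
  obtain ⟨z₂, hz₂M, hz₂q, hz₂1⟩ := exists_prime_order_not_mem hq₂ M g hg (h3 q₂ hq₂ hq₂d)
  have ho₁ : orderOf z₁ = q₁ := orderOf_eq_prime hz₁q hz₁1
  have ho₂ : orderOf z₂ = q₂ := orderOf_eq_prime hz₂q hz₂1
  have hco12 : Nat.Coprime (orderOf z₁) (orderOf z₂) := by
    rw [ho₁, ho₂]; exact (Nat.coprime_primes hq₁ hq₂).mpr hqne
  have h12M : z₁ * z₂ ∉ M := fun h =>
    hz₁M ((Subgroup.zpowers_le.mpr h) (mem_zpowers_mul_left hco12))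
  set V : Set G := (nonGens M \ {x})ᶜ with hVdef
  have hV : ∀ z : G, z ∉ M → z ∈ V := by
    intro z hz hcon
    exact hz hcon.1.1
  have hxV : x ∈ V := fun hcon => hcon.2 rfl
  have hreach := reach_hub (M := M) hV hq₁ hq₂ hqne hz₁M hz₂M ho₁ ho₂ h12M
  -- x reaches the hub
  have hxMbar : x ∈ Mbar M := nonGens_subset_Mbar hM h3 hx
  obtain ⟨y₀, hy₀M, hxM', hxy₀⟩ := mem_Mbar.mp hxMbar
  have hxy₀ne : x ≠ y₀ := fun h => hy₀M (h ▸ hxM')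
  have hxreach : ((powerGraph G).induce V).Reachable ⟨x, hxV⟩ ⟨z₁ * z₂, hV _ h12M⟩ :=
    (reach_adj hxV (hV _ hy₀M) hxy₀ne (Or.inl hxy₀)).trans (hreach y₀ hy₀M)
  -- every vertex reaches the hub
  have key : ∀ w : ↥V, ((powerGraph G).induce V).Reachable w ⟨z₁ * z₂, hV _ h12M⟩ := by
    intro w
    by_cases hwM : (w : G) ∈ M
    · by_cases hwx : (w : G) = x
      · have : w = (⟨x, hxV⟩ : ↥V) := Subtype.ext hwx
        rw [this]
        exact hxreach
      · -- w is a generator of M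
        have hwgen : Subgroup.zpowers (w : G) = M := by
          by_contra hcon
          exact (w.2 ⟨⟨hwM, hcon⟩, hwx⟩)
        have hxw : x ∈ Subgroup.zpowers (w : G) := hwgen ▸ hx.1
        have hwne : (w : G) ≠ x := hwx
        have e : ((powerGraph G).induce V).Reachable ⟨(w : G), w.2⟩ ⟨x, hxV⟩ :=
          reach_adj _ _ hwne (Or.inr hxw)
        exact e.trans hxreach
    · exact hreach (w : G) hwM
  intro u v
  exact (key u).trans (key v).symm
end


/-- Proposition (M-M-2): `G` finite non-cyclic abelian with at least two distinct prime
divisors of its order; for every maximal cyclic subgroup `M` the following are equivalent: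
(1) the cut-set `M̃` of `P(G)` is minimal; (2) `M̄ = M̃`; (3) every Sylow subgroup of `G`
(at a prime dividing `|G|`) is non-cyclic. -/
theorem statement_18 {G : Type*} [CommGroup G] [Fintype G] (hnc : ¬ IsCyclic G)
    (hdiv : ∃ q₁ q₂ : ℕ, q₁.Prime ∧ q₂.Prime ∧ q₁ ≠ q₂ ∧
      q₁ ∣ Nat.card G ∧ q₂ ∣ Nat.card G)
    (M : Subgroup G) (hM : IsMaxCyclic M) :
    (IsMinimalCutSet (nonGens M) ↔
      (∀ q : ℕ, q.Prime → q ∣ Nat.card G →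
        ∀ P : Sylow q G, ¬ IsCyclic ↥((P : Subgroup G)))) ∧
    (Mbar M = nonGens M ↔
      (∀ q : ℕ, q.Prime → q ∣ Nat.card G →
        ∀ P : Sylow q G, ¬ IsCyclic ↥((P : Subgroup G)))) := by
  constructor
  · constructor
    · intro hmin
      by_contra h3n
      push_neg at h3n
      obtain ⟨q, hq, hqd, P, hPc⟩ := h3n
      obtain ⟨x, hx, hxbad⟩ := exists_bad hq hqd hM P hPc
      exact hmin.2 x hx (isCutSet_nonGens_diff hnc hM hx hxbad)
    · intro h3
      refine ⟨isCutSet_nonGens hnc hM, fun x hx hcut => ?_⟩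
      exact hcut (minimality_aux hnc hdiv hM h3 hx)
  · constructor
    · intro heq
      by_contra h3n
      push_neg at h3n
      obtain ⟨q, hq, hqd, P, hPc⟩ := h3n
      obtain ⟨x, hx, hxbad⟩ := exists_bad hq hqd hM P hPc
      exact hxbad (heq ▸ hx)
    · intro h3
      exact subset_antisymm (Mbar_subset_nonGens hM) (nonGens_subset_Mbar hM h3)
end

section
/- Let H be a cyclic group of order p1^{n1} p2^{n2}, where p1 < p2 are primes, n1, n2 ≥ 1, and p1 ≥ 3. Then every cut-set X of the power graph P(H) satisfies |X| > |H̃|, where H̃ is the set of non-generators of H, so |H̃| = p1^{n1} p2^{n2} − φ(p1^{n1} p2^{n2}). -/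
theorem gens_ncard_aux {H : Type*} [Group H] [Fintype H] (hH : IsCyclic H) :
    {x : H | Subgroup.zpowers x = ⊤}.ncard = (Nat.card H).totient := by
  classical
  have key : ∀ x : H, Subgroup.zpowers x = ⊤ ↔ orderOf x = Fintype.card H := by
    intro x
    constructor
    · intro h
      exact orderOf_eq_card_of_forall_mem_zpowers (by simp [h]) |>.trans Nat.card_eq_fintype_card
    · intro h
      apply Subgroup.eq_top_of_card_eq
      rw [Nat.card_zpowers, h, Nat.card_eq_fintype_card]
  have : {x : H | Subgroup.zpowers x = ⊤} =
      ↑(Finset.univ.filter fun a : H => orderOf a = Fintype.card H) := by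
    ext x; simp [key x]
  rw [this, Set.ncard_coe_finset, Nat.card_eq_fintype_card]
  exact hH.card_orderOf_eq_totient dvd_rfl

theorem cutset_gens_aux {G : Type*} [Group G] (X : Set G) (hX : IsCutSet X) :
    {x : G | Subgroup.zpowers x = ⊤} ⊆ X := by
  intro g hg
  by_contra hgX
  apply hX
  intro u v
  have hgc : g ∈ Xᶜ := hgX
  set g' : ↥(Xᶜ) := ⟨g, hgc⟩
  have toG : ∀ w : ↥(Xᶜ), ((powerGraph G).induce Xᶜ).Reachable w g' := by
    intro w
    by_cases hw : w = g'
    · exact hw ▸ SimpleGraph.Reachable.refl _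
    · refine SimpleGraph.Adj.reachable ?_
      refine ⟨fun h => hw (Subtype.ext h), Or.inl ?_⟩
      show (w : G) ∈ Subgroup.zpowers (g : G)
      rw [hg]; trivial
  exact (toG u).trans (toG v).symm

/-- Lemma (max-min-cut): `H` cyclic of order `p₁^{n₁} p₂^{n₂}` with `3 ≤ p₁ < p₂`; then every
cut-set `X` of the power graph `P(H)` satisfies `|X| > |H̃|`, where `H̃` is the set of
non-generators of `H`, of size `p₁^{n₁} p₂^{n₂} - φ(p₁^{n₁} p₂^{n₂})`. -/
theorem statement_19 {H : Type*} [Group H] [Fintype H] (hH : IsCyclic H)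
    (p₁ p₂ n₁ n₂ : ℕ) (hp₁ : p₁.Prime) (hp₂ : p₂.Prime) (hlt : p₁ < p₂)
    (hn₁ : 1 ≤ n₁) (hn₂ : 1 ≤ n₂) (h3 : 3 ≤ p₁)
    (hcard : Nat.card H = p₁ ^ n₁ * p₂ ^ n₂) :
    (nonGens (⊤ : Subgroup H)).ncard
      = p₁ ^ n₁ * p₂ ^ n₂ - Nat.totient (p₁ ^ n₁ * p₂ ^ n₂) ∧
    ∀ X : Set H, IsCutSet X → (nonGens (⊤ : Subgroup H)).ncard < X.ncard := by
  classical
  set n := p₁ ^ n₁ * p₂ ^ n₂ with hn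
  set S : Set H := {x : H | Subgroup.zpowers x = ⊤} with hS
  have hSncard : S.ncard = n.totient := by
    rw [gens_ncard_aux hH, hcard]
  have hnonGens : nonGens (⊤ : Subgroup H) = Sᶜ := by
    ext x; simp [nonGens, hS]
  have hcompl : S.ncard + Sᶜ.ncard = n := by
    rw [Set.ncard_add_ncard_compl, hcard]
  have htot_le : n.totient ≤ n := Nat.totient_le n
  -- key inequality : n < 2 * n.totient
  have hkey : n < 2 * n.totient := by
    obtain ⟨m₁, rfl⟩ : ∃ m, n₁ = m + 1 := ⟨n₁ - 1, by omega⟩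
    obtain ⟨m₂, rfl⟩ : ∃ m, n₂ = m + 1 := ⟨n₂ - 1, by omega⟩
    have hcop : Nat.Coprime (p₁ ^ (m₁ + 1)) (p₂ ^ (m₂ + 1)) :=
      Nat.Coprime.pow _ _ ((Nat.coprime_primes hp₁ hp₂).mpr (Nat.ne_of_lt hlt))
    have h5 : 5 ≤ p₂ := by
      by_contra h
      have h4 : p₂ = 4 := by omega
      rw [h4] at hp₂
      norm_num at hp₂
    rw [hn, Nat.totient_mul hcop, Nat.totient_prime_pow hp₁ (Nat.succ_pos m₁),
      Nat.totient_prime_pow hp₂ (Nat.succ_pos m₂)]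
    have ha : 1 ≤ p₁ ^ m₁ := Nat.one_le_pow _ _ hp₁.pos
    have hb : 1 ≤ p₂ ^ m₂ := Nat.one_le_pow _ _ hp₂.pos
    have e1 : p₁ ^ (m₁ + 1) = p₁ ^ m₁ * p₁ := pow_succ p₁ m₁
    have e2 : p₂ ^ (m₂ + 1) = p₂ ^ m₂ * p₂ := pow_succ p₂ m₂
    rw [e1, e2]
    set a := p₁ ^ m₁
    set b := p₂ ^ m₂
    have hq1 : p₁ - 1 + 1 = p₁ := by omega
    have hq2 : p₂ - 1 + 1 = p₂ := by omega
    set q₁ := p₁ - 1 with hq₁def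
    set q₂ := p₂ - 1 with hq₂def
    have hq1' : 2 ≤ q₁ := by omega
    have hq2' : 4 ≤ q₂ := by omega
    calc a * p₁ * (b * p₂) = a * b * ((q₁ + 1) * (q₂ + 1)) := by rw [hq1, hq2]; ring
    _ < a * b * (2 * (q₁ * q₂)) := by
        have hab : 0 < a * b := by positivity
        have step : (q₁ + 1) * (q₂ + 1) < 2 * (q₁ * q₂) := by nlinarith
        exact (Nat.mul_lt_mul_left hab).mpr step
    _ = 2 * (a * q₁ * (b * q₂)) := by ring
  constructor
  · rw [hnonGens]
    omega
  · intro X hX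
    have hsub : S ⊆ X := cutset_gens_aux X hX
    have hXfin : X.Finite := Set.toFinite X
    have hle : S.ncard ≤ X.ncard := Set.ncard_le_ncard hsub hXfin
    rw [hnonGens]
    omega
end
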